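/- Let f be a holomorphic nowhere-vanishing function on ℂ ∖ {0} and suppose there exist k ∈ ℤ and constants 0 < m ≤ M with m ≤ |f(z)·z^{−k}| ≤ M for all z ≠ 0. Then there exists c ∈ ℂ* such that f(z) = c·zᵏ for all z ∈ ℂ ∖ {0}. -/

import Mathlib

open Topology Filter Function


/-- Let `f` be holomorphic and nowhere vanishing on `ℂ ∖ {0}` and suppose
`|f(z)·z^{−k}|` is bounded above and below by positive constants.  Then `f(z) = c·zᵏ` for
some `c ∈ ℂ*`. -/
theorem punctured_plane_classification (f : ℂ → ℂ)
    (hf : DifferentiableOn ℂ f (({0} : Set ℂ)ᶜ))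
    (hne : ∀ z ∈ (({0} : Set ℂ)ᶜ), f z ≠ 0)
    (k : ℤ) (m M : ℝ) (hm : 0 < m) (hmM : m ≤ M)
    (hbd : ∀ z ∈ (({0} : Set ℂ)ᶜ),
      m ≤ ‖f z * z ^ (-k)‖ ∧ ‖f z * z ^ (-k)‖ ≤ M) :
    ∃ c : ℂ, c ≠ 0 ∧ ∀ z ∈ (({0} : Set ℂ)ᶜ), f z = c * z ^ k := by
  set g : ℂ → ℂ := fun z => f z * z ^ (-k) with hg
  have hgd : DifferentiableOn ℂ g (Set.univ \ ({0} : Set ℂ)) := by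
    have : DifferentiableOn ℂ g (({0} : Set ℂ)ᶜ) := by
      apply hf.mul
      exact differentiableOn_zpow (-k) _ (Or.inl (by simp))
    exact this.mono (by intro z hz; simpa using hz.2)
  have hbdd : BddAbove (norm ∘ g '' (Set.univ \ ({0} : Set ℂ))) := by
    refine ⟨M, ?_⟩
    rintro x ⟨z, hz, rfl⟩
    have hz' : z ∈ (({0} : Set ℂ)ᶜ) := by simpa using hz.2
    simpa only [Function.comp_apply] using (hbd z hz').2
  have hmem : Set.univ ∈ 𝓝 (0 : ℂ) := Filter.univ_mem
  set h : ℂ → ℂ := Function.update g 0 (limUnder (𝓝[≠] (0:ℂ)) g) with hh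
  have hhd : Differentiable ℂ h := by
    have := Complex.differentiableOn_update_limUnder_of_bddAbove hmem hgd hbdd
    rw [← differentiableOn_univ]; exact this
  -- h is bounded by M
  have hhb : ∀ z : ℂ, ‖h z‖ ≤ M := by
    have hne0 : ∀ z : ℂ, z ≠ 0 → ‖h z‖ ≤ M := by
      intro z hz
      rw [hh, Function.update_of_ne hz]
      exact (hbd z (by simpa using hz)).2
    intro z
    by_cases hz : z = 0
    · subst hz
      have hcont : ContinuousAt h 0 := hhd.continuous.continuousAt
      have htend : Filter.Tendsto (fun z => ‖h z‖) (𝓝[≠] (0:ℂ)) (𝓝 ‖h 0‖) :=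
        (hcont.continuousWithinAt.norm).tendsto
      refine le_of_tendsto htend ?_
      filter_upwards [self_mem_nhdsWithin] with z hz using hne0 z hz
    · exact hne0 z hz
  have hrange : Bornology.IsBounded (Set.range h) := by
    rw [Metric.isBounded_iff_subset_closedBall 0]
    exact ⟨M, by rintro x ⟨z, rfl⟩; simpa [Complex.dist_eq] using hhb z⟩
  have hconst : ∀ z : ℂ, h z = h 1 := fun z => hhd.apply_eq_apply_of_bounded hrange z 1
  refine ⟨h 1, ?_, ?_⟩
  · have h1 : (1 : ℂ) ≠ 0 := one_ne_zero
    have : m ≤ ‖g 1‖ := (hbd 1 (by simpa using h1)).1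
    have heq : h 1 = g 1 := Function.update_of_ne h1 _ _
    rw [heq]
    intro h0
    rw [h0] at this
    simp at this
    linarith
  · intro z hz
    have hz0 : z ≠ 0 := by simpa using hz
    have : g z = h 1 := by rw [← hconst z, hh, Function.update_of_ne hz0]
    have hzk : z ^ (-k) * z ^ k = 1 := by
      rw [zpow_neg, inv_mul_cancel₀ (zpow_ne_zero k hz0)]
    calc f z = f z * (z ^ (-k) * z ^ k) := by rw [hzk, mul_one]
      _ = g z * z ^ k := by ring
      _ = h 1 * z ^ k := by rw [this]
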